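/- (Sub-multiplicativity of contraction coefficients.) Let f:(0,∞)→ℝ be a convex function with f(1)=0 that is strictly convex at 1. Let 𝒰, 𝒳, 𝒴 be finite sets with at least two elements each, let P_U be a pmf on 𝒰, let S be a channel from 𝒰 to 𝒳, and let W be a channel from 𝒳 to 𝒴. Set P_X = S P_U, so that the composed channel from 𝒰 to 𝒴 is WS (corresponding to a Markov chain U → X → Y). Then η_f(P_U, WS) ≤ η_f(P_U, S) · η_f(P_X, W). -/

import Mathlib

/-- A probability mass function on a finite set. -/
def IsPmf {𝒳 : Type*} [Fintype 𝒳] (P : 𝒳 → ℝ) : Prop :=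
  (∀ x, 0 ≤ P x) ∧ ∑ x, P x = 1

/-- A channel (column-stochastic matrix) from `𝒳` to `𝒴`: each column `W · x` is a pmf. -/
def IsChannel {𝒳 𝒴 : Type*} [Fintype 𝒳] [Fintype 𝒴] (W : 𝒴 → 𝒳 → ℝ) : Prop :=
  (∀ y x, 0 ≤ W y x) ∧ ∀ x, ∑ y, W y x = 1

/-- Action of a channel on a pmf: `(W P)(y) = ∑ₓ W(y|x) P(x)`. -/
def chanApply {𝒳 𝒴 : Type*} [Fintype 𝒳] (W : 𝒴 → 𝒳 → ℝ) (P : 𝒳 → ℝ) : 𝒴 → ℝ :=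
  fun y => ∑ x, W y x * P x

/-- `f` is strictly convex at `1`. -/
def StrictlyConvexAtOne (f : ℝ → ℝ) : Prop :=
  ∀ x y : ℝ, 0 < x → 0 < y → x ≠ y → ∀ l : ℝ, 0 < l → l < 1 →
    l * x + (1 - l) * y = 1 → f 1 < l * f x + (1 - l) * f y

/-- `f(0) := lim_{t→0⁺} f(t)`, as an extended real (the limit exists for convex `f`;
we use a `limsup` to name it). -/
noncomputable def fZero (f : ℝ → ℝ) : EReal :=
  Filter.limsup (fun t : ℝ => ((f t : ℝ) : EReal)) (nhdsWithin 0 (Set.Ioi (0 : ℝ)))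

/-- `lim_{p→0⁺} p f(1/p)`, as an extended real. -/
noncomputable def fInftySlope (f : ℝ → ℝ) : EReal :=
  Filter.limsup (fun p : ℝ => ((p * f (1 / p) : ℝ) : EReal))
    (nhdsWithin 0 (Set.Ioi (0 : ℝ)))

/-- Extended-real-valued f-divergence
`D_f(R‖P) = ∑ₓ P(x) f(R(x)/P(x))`, with the conventions `f(0) = lim_{t→0⁺} f(t)`,
`0·f(0/0) = 0`, and `0·f(r/0) = r·lim_{p→0⁺} p f(1/p)`. -/
noncomputable def fDivE {𝒳 : Type*} [Fintype 𝒳] (f : ℝ → ℝ) (R P : 𝒳 → ℝ) : EReal :=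
  ∑ x, if P x = 0 then ((R x : ℝ) : EReal) * fInftySlope f
       else if R x = 0 then ((P x : ℝ) : EReal) * fZero f
       else ((P x * f (R x / P x) : ℝ) : EReal)

/-- Contraction coefficient
`η_f(P,W) = sup { D_f(WR‖WP)/D_f(R‖P) : R pmf, 0 < D_f(R‖P) < ∞ }`,
defined to be `0` if the supremum is over the empty set. -/
noncomputable def etaF {𝒳 𝒴 : Type*} [Fintype 𝒳] [Fintype 𝒴]
    (f : ℝ → ℝ) (P : 𝒳 → ℝ) (W : 𝒴 → 𝒳 → ℝ) : EReal := by
  classical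
  exact if ({q : EReal | ∃ R : 𝒳 → ℝ, IsPmf R ∧ 0 < fDivE f R P ∧ fDivE f R P < ⊤ ∧
        q = fDivE f (chanApply W R) (chanApply W P) / fDivE f R P} : Set EReal).Nonempty
  then sSup {q : EReal | ∃ R : 𝒳 → ℝ, IsPmf R ∧ 0 < fDivE f R P ∧ fDivE f R P < ⊤ ∧
        q = fDivE f (chanApply W R) (chanApply W P) / fDivE f R P}
  else 0

/-- Composition of channels: `(W ∘ S)(y|u) = ∑ₓ W(y|x) S(x|u)`. -/
def chanComp {𝒰 𝒳 𝒴 : Type*} [Fintype 𝒳] (W : 𝒴 → 𝒳 → ℝ) (S : 𝒳 → 𝒰 → ℝ) :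
    𝒴 → 𝒰 → ℝ :=
  fun y u => ∑ x, W y x * S x u

open Filter Set
open scoped Topology

lemma le_limsup_aux {u h : ℝ → ℝ} {c : ℝ}
    (hle : ∀ᶠ t in 𝓝[>] (0:ℝ), h t ≤ u t) (ht : Filter.Tendsto h (𝓝[>] (0:ℝ)) (nhds c)) :
    (c : EReal) ≤ Filter.limsup (fun t => ((u t : ℝ) : EReal)) (𝓝[>] (0:ℝ)) := by
  have h1 : Filter.limsup (fun t => ((h t:ℝ):EReal)) (𝓝[>] (0:ℝ)) = (c:EReal) :=
    (EReal.tendsto_coe.2 ht).limsup_eq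
  rw [← h1]
  exact Filter.limsup_le_limsup (hle.mono fun t ht => EReal.coe_le_coe_iff.2 ht)

-- slope lemma wrapper
lemma slope_mono3 {f : ℝ → ℝ} (hconv : ConvexOn ℝ (Set.Ioi (0:ℝ)) f)
    {a b c : ℝ} (ha : 0 < a) (hab : a < b) (hbc : b < c) :
    (f b - f a) / (b - a) ≤ (f c - f b) / (c - b) :=
  hconv.slope_mono_adjacent (Set.mem_Ioi.2 ha) (Set.mem_Ioi.2 (ha.trans (hab.trans hbc))) hab hbc

variable {f : ℝ → ℝ}

lemma slope_le_fInftySlope (hconv : ConvexOn ℝ (Set.Ioi (0:ℝ)) f)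
    {a b : ℝ} (ha : 0 < a) (hab : a < b) :
    (((f b - f a) / (b - a) : ℝ) : EReal) ≤ fInftySlope f := by
  set m := (f b - f a) / (b - a) with hm
  have hb : 0 < b := ha.trans hab
  apply le_limsup_aux (h := fun p => p * f b + (1 - p * b) * m)
  · filter_upwards [Ioo_mem_nhdsGT_of_mem (⟨le_refl 0, by positivity⟩ :
      (0:ℝ) ∈ Set.Ico 0 (1/b))] with p hp
    obtain ⟨hp0, hp1⟩ := hp
    have hpb : p * b < 1 := by
      rw [← lt_div_iff₀ hb]; simpa [mul_comm] using hp1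
    have htb : b < 1 / p := by
      rw [lt_div_iff₀ hp0, mul_comm]; exact hpb
    have hs2 : m * (1/p - b) ≤ f (1/p) - f b := by
      have h1 : m ≤ (f (1/p) - f b)/(1/p - b) := hm ▸ slope_mono3 hconv ha hab htb
      rw [le_div_iff₀ (by linarith)] at h1; linarith
    have h4 := mul_le_mul_of_nonneg_left hs2 hp0.le
    have h5 : p * (m * (1/p - b)) = m - p*b*m := by field_simp
    nlinarith [h4, h5]
  · have hcont : Continuous fun p : ℝ => p * f b + (1 - p * b) * m := by continuity
    have := hcont.tendsto 0
    simp only [zero_mul, mul_zero, sub_zero, one_mul, zero_add] at this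
    exact this.mono_left nhdsWithin_le_nhds

lemma fZero_ge {u c : ℝ} (hu : 0 < u)
    (hc : ∀ t, 0 < t → t < u → f u - f t ≤ (u - t) * c) :
    ((f u - u * c : ℝ) : EReal) ≤ fZero f := by
  apply le_limsup_aux (h := fun t => f u - (u - t) * c)
  · filter_upwards [Ioo_mem_nhdsGT_of_mem (⟨le_refl 0, hu⟩ : (0:ℝ) ∈ Set.Ico 0 u)] with t ht
    have := hc t ht.1 ht.2; linarith
  · have hcont : Continuous fun t : ℝ => f u - (u - t) * c := by continuity
    have := hcont.tendsto 0
    simp only [sub_zero] at this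
    exact this.mono_left nhdsWithin_le_nhds

lemma fZero_ge_convex (hconv : ConvexOn ℝ (Set.Ioi (0:ℝ)) f)
    {y lam : ℝ} (hy : 0 < y) (h0 : 0 < lam) (h1 : lam < 1) :
    (((f ((1-lam)*y) - (1-lam) * f y)/lam : ℝ) : EReal) ≤ fZero f := by
  apply le_limsup_aux (h := fun t => (f (lam*t + (1-lam)*y) - (1-lam)*f y)/lam)
  · filter_upwards [self_mem_nhdsWithin] with t ht
    have hconv2 := hconv.2 (Set.mem_Ioi.2 (Set.mem_Ioi.1 ht)) (Set.mem_Ioi.2 hy)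
      h0.le (by linarith : (0:ℝ) ≤ 1 - lam) (by ring)
    simp only [smul_eq_mul] at hconv2
    rw [div_le_iff₀ h0]
    linarith
  · have hy' : (0:ℝ) < (1-lam)*y := mul_pos (by linarith) hy
    have hca : ContinuousAt f ((1-lam)*y) :=
      (hconv.continuousOn isOpen_Ioi).continuousAt (Ioi_mem_nhds hy')
    have hg : Filter.Tendsto (fun t : ℝ => lam*t + (1-lam)*y) (𝓝[>] 0) (𝓝 ((1-lam)*y)) := by
      have hcont : Continuous fun t : ℝ => lam*t + (1-lam)*y := by continuity
      have := hcont.tendsto 0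
      simp only [mul_zero, zero_add] at this
      exact this.mono_left nhdsWithin_le_nhds
    exact ((hca.tendsto.comp hg).sub_const _).div_const _

lemma fInftySlope_ne_bot (hconv : ConvexOn ℝ (Set.Ioi (0:ℝ)) f) : fInftySlope f ≠ ⊥ :=
  fun h => EReal.coe_ne_bot _ (le_bot_iff.1 (h ▸ slope_le_fInftySlope hconv one_pos one_lt_two))

lemma fZero_ne_bot (hconv : ConvexOn ℝ (Set.Ioi (0:ℝ)) f) : fZero f ≠ ⊥ := by
  have h := fZero_ge (f := f) one_pos (c := f 2 - f 1) ?_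
  · exact fun hb => EReal.coe_ne_bot _ (le_bot_iff.1 (hb ▸ h))
  · intro t ht0 ht1
    have := slope_mono3 hconv ht0 ht1 one_lt_two
    rw [div_le_div_iff₀ (by linarith) (by linarith)] at this
    linarith

lemma coe_mul_ne_bot {p : ℝ} (hp : 0 ≤ p) {a : EReal} (ha : a ≠ ⊥) : (p:EReal) * a ≠ ⊥ := by
  induction a with
  | bot => exact absurd rfl ha
  | coe x => rw [← EReal.coe_mul]; exact EReal.coe_ne_bot _
  | top =>
    rcases hp.eq_or_lt with h|h
    · rw [← h]; simp
    · rw [EReal.coe_mul_top_of_pos h]; simp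

lemma add_coe_mul {r1 r2 : ℝ} (hr1 : 0 ≤ r1) (hr2 : 0 ≤ r2) (a : EReal) :
    ((r1 + r2 : ℝ) : EReal) * a = (r1 : EReal) * a + (r2 : EReal) * a := by
  rcases hr1.eq_or_lt with h1|h1
  · rw [← h1]; simp
  rcases hr2.eq_or_lt with h2|h2
  · rw [← h2]; simp
  induction a with
  | bot =>
    rw [EReal.coe_mul_bot_of_pos h1, EReal.coe_mul_bot_of_pos h2,
      EReal.coe_mul_bot_of_pos (by linarith)]; rfl
  | coe x => norm_cast; ring
  | top =>
    rw [EReal.coe_mul_top_of_pos h1, EReal.coe_mul_top_of_pos h2,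
      EReal.coe_mul_top_of_pos (by linarith)]; rfl

lemma coe_mul_assoc {c r : ℝ} (hc : 0 < c) (hr : 0 ≤ r) (a : EReal) :
    ((c * r : ℝ) : EReal) * a = (c : EReal) * ((r : EReal) * a) := by
  induction a with
  | bot =>
    rcases hr.eq_or_lt with h|h
    · rw [← h]; simp
    · rw [EReal.coe_mul_bot_of_pos h, EReal.coe_mul_bot_of_pos (by positivity),
        EReal.coe_mul_bot_of_pos hc]
  | coe x => norm_cast; ring
  | top =>
    rcases hr.eq_or_lt with h|h
    · rw [← h]; simp
    · rw [EReal.coe_mul_top_of_pos h, EReal.coe_mul_top_of_pos (by positivity),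
        EReal.coe_mul_top_of_pos hc]

noncomputable def G (f : ℝ → ℝ) (r p : ℝ) : EReal :=
  if p = 0 then ((r : ℝ) : EReal) * fInftySlope f
  else if r = 0 then ((p : ℝ) : EReal) * fZero f
  else ((p * f (r / p) : ℝ) : EReal)

lemma G_p0 (r : ℝ) : G f r 0 = (r : EReal) * fInftySlope f := if_pos rfl

lemma G_r0 {p : ℝ} (hp : p ≠ 0) : G f 0 p = (p : EReal) * fZero f := by
  rw [G, if_neg hp, if_pos rfl]

lemma G_pos {r p : ℝ} (hp : p ≠ 0) (hr : r ≠ 0) :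
    G f r p = ((p * f (r / p) : ℝ) : EReal) := by
  rw [G, if_neg hp, if_neg hr]

-- case B : p1 = 0 side, r1 > 0, p2 > 0
lemma caseB (hconv : ConvexOn ℝ (Set.Ioi (0:ℝ)) f)
    {r1 r2 p2 : ℝ} (hr1 : 0 < r1) (hr2 : 0 ≤ r2) (hp2 : 0 < p2) :
    ((p2 * f ((r1+r2)/p2) : ℝ) : EReal) ≤ (r1 : EReal) * fInftySlope f + G f r2 p2 := by
  rcases hr2.eq_or_lt with h2|h2
  · -- r2 = 0
    rw [← h2, add_zero, G_r0 hp2.ne']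
    set u := r1 / p2 with hu
    have hu0 : 0 < u := by positivity
    rcases eq_or_ne (fInftySlope f) ⊤ with hs|hs
    case inl =>
      rw [hs, EReal.coe_mul_top_of_pos (by exact_mod_cast hr1),
        EReal.top_add_of_ne_bot (coe_mul_ne_bot hp2.le (fZero_ne_bot hconv))]
      exact le_top
    case inr =>
      obtain ⟨s₀, hs₀⟩ : ∃ s₀ : ℝ, fInftySlope f = (s₀ : EReal) :=
        ⟨(fInftySlope f).toReal, (EReal.coe_toReal hs (fInftySlope_ne_bot hconv)).symm⟩
      have hslope : ∀ t, 0 < t → t < u → f u - f t ≤ (u - t) * s₀ := by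
        intro t ht0 htu
        have := slope_le_fInftySlope hconv ht0 htu
        rw [hs₀, EReal.coe_le_coe_iff, div_le_iff₀ (by linarith)] at this
        linarith
      have hz := fZero_ge hu0 hslope
      rcases eq_or_ne (fZero f) ⊤ with hzz|hzz
      case inl =>
        rw [hzz, EReal.coe_mul_top_of_pos (by exact_mod_cast hp2), hs₀,
          ← EReal.coe_mul, EReal.add_top_of_ne_bot (EReal.coe_ne_bot _)]
        exact le_top
      case inr =>
        obtain ⟨z₀, hz₀⟩ : ∃ z₀ : ℝ, fZero f = (z₀ : EReal) :=
          ⟨(fZero f).toReal, (EReal.coe_toReal hzz (fZero_ne_bot hconv)).symm⟩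
        rw [hz₀, EReal.coe_le_coe_iff] at hz
        rw [hs₀, hz₀, ← EReal.coe_mul, ← EReal.coe_mul, ← EReal.coe_add, EReal.coe_le_coe_iff]
        have h6 : p2 * f u ≤ p2 * (z₀ + u * s₀) := mul_le_mul_of_nonneg_left (by linarith) hp2.le
        have h7 : p2 * (z₀ + u * s₀) = p2 * z₀ + r1 * s₀ := by rw [hu]; field_simp
        linarith
  · -- r2 > 0
    rw [G_pos hp2.ne' h2.ne']
    rcases eq_or_ne (fInftySlope f) ⊤ with hs|hs
    case inl =>
      rw [hs, EReal.coe_mul_top_of_pos (by exact_mod_cast hr1),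
        EReal.top_add_of_ne_bot (EReal.coe_ne_bot _)]
      exact le_top
    case inr =>
      obtain ⟨s₀, hs₀⟩ : ∃ s₀ : ℝ, fInftySlope f = (s₀ : EReal) :=
        ⟨(fInftySlope f).toReal, (EReal.coe_toReal hs (fInftySlope_ne_bot hconv)).symm⟩
      set a := r2 / p2 with ha
      set b := (r1 + r2) / p2 with hb
      have ha0 : 0 < a := by positivity
      have hab : a < b := by
        rw [ha, hb, div_lt_div_iff_of_pos_right hp2]; linarith
      have := slope_le_fInftySlope hconv ha0 hab
      rw [hs₀, EReal.coe_le_coe_iff, div_le_iff₀ (by linarith)] at this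
      rw [hs₀, ← EReal.coe_mul, ← EReal.coe_add, EReal.coe_le_coe_iff]
      have hba : b - a = r1 / p2 := by rw [ha, hb]; ring
      rw [hba] at this
      have : p2 * (f b - f a) ≤ p2 * (r1/p2 * s₀) := by nlinarith
      have hcancel : p2 * (r1/p2 * s₀) = r1 * s₀ := by field_simp
      linarith

-- case C : p1 > 0, r1 = 0, p2 > 0, r2 > 0
lemma caseC (hconv : ConvexOn ℝ (Set.Ioi (0:ℝ)) f)
    {r2 p1 p2 : ℝ} (hp1 : 0 < p1) (hp2 : 0 < p2) (hr2 : 0 < r2) :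
    (((p1+p2) * f (r2/(p1+p2)) : ℝ) : EReal) ≤ (p1 : EReal) * fZero f + ((p2 * f (r2/p2) : ℝ) : EReal) := by
  rcases eq_or_ne (fZero f) ⊤ with hz|hz
  · rw [hz, EReal.coe_mul_top_of_pos (by exact_mod_cast hp1),
      EReal.top_add_of_ne_bot (EReal.coe_ne_bot _)]
    exact le_top
  · obtain ⟨z₀, hz₀⟩ : ∃ z₀ : ℝ, fZero f = (z₀ : EReal) :=
      ⟨(fZero f).toReal, (EReal.coe_toReal hz (fZero_ne_bot hconv)).symm⟩
    have hP0 : 0 < p1 + p2 := by positivity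
    have hl0 : 0 < p1 / (p1+p2) := by positivity
    have hl1 : p1 / (p1+p2) < 1 := by rw [div_lt_one hP0]; linarith
    have hy0 : 0 < r2 / p2 := by positivity
    have key := fZero_ge_convex hconv hy0 hl0 hl1
    rw [hz₀, EReal.coe_le_coe_iff, div_le_iff₀ hl0] at key
    have h1 : (1 - p1/(p1+p2)) * (r2/p2) = r2 / (p1+p2) := by field_simp; ring
    have h1' : (1 - p1/(p1+p2)) * f (r2/p2) = p2/(p1+p2) * f (r2/p2) := by
      have : 1 - p1/(p1+p2) = p2/(p1+p2) := by field_simp; ring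
      rw [this]
    rw [h1, h1'] at key
    -- key : f (r2/(p1+p2)) - p2/(p1+p2) * f (r2/p2) ≤ z₀ * (p1/(p1+p2))
    rw [hz₀, ← EReal.coe_mul, ← EReal.coe_add, EReal.coe_le_coe_iff]
    have h2 := mul_le_mul_of_nonneg_left key hP0.le
    have h3 : (p1+p2) * (z₀ * (p1/(p1+p2))) = p1 * z₀ := by field_simp
    have h4 : (p1+p2) * (f (r2/(p1+p2)) - p2/(p1+p2) * f (r2/p2))
        = (p1+p2) * f (r2/(p1+p2)) - p2 * f (r2/p2) := by field_simp
    linarith [h2, h3, h4]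

-- perspective inequality, all positive
lemma casePos (hconv : ConvexOn ℝ (Set.Ioi (0:ℝ)) f)
    {r1 r2 p1 p2 : ℝ} (hr1 : 0 < r1) (hr2 : 0 < r2) (hp1 : 0 < p1) (hp2 : 0 < p2) :
    (p1+p2) * f ((r1+r2)/(p1+p2)) ≤ p1 * f (r1/p1) + p2 * f (r2/p2) := by
  have hP0 : 0 < p1 + p2 := by positivity
  have hkey := hconv.2 (Set.mem_Ioi.2 (show (0:ℝ) < r1/p1 by positivity))
    (Set.mem_Ioi.2 (show (0:ℝ) < r2/p2 by positivity))
    (show (0:ℝ) ≤ p1/(p1+p2) by positivity) (show (0:ℝ) ≤ p2/(p1+p2) by positivity)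
    (by field_simp)
  simp only [smul_eq_mul] at hkey
  have harg : p1/(p1+p2) * (r1/p1) + p2/(p1+p2) * (r2/p2) = (r1+r2)/(p1+p2) := by
    field_simp
  rw [harg] at hkey
  have h2 := mul_le_mul_of_nonneg_left hkey hP0.le
  have hc1 : (p1+p2) * (p1/(p1+p2) * f (r1/p1) + p2/(p1+p2) * f (r2/p2))
      = p1 * f (r1/p1) + p2 * f (r2/p2) := by field_simp
  linarith [h2, hc1]

lemma G_superadd_left (hconv : ConvexOn ℝ (Set.Ioi (0:ℝ)) f)
    {r1 r2 p2 : ℝ} (hr1 : 0 ≤ r1) (hr2 : 0 ≤ r2) (hp2 : 0 ≤ p2) :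
    G f (r1+r2) (0+p2) ≤ G f r1 0 + G f r2 p2 := by
  rw [zero_add, G_p0]
  rcases hp2.eq_or_lt with h2|h2
  · -- p2 = 0
    rw [← h2, G_p0, G_p0]
    exact le_of_eq (add_coe_mul hr1 hr2 _)
  · rcases hr1.eq_or_lt with h1|h1
    · rw [← h1, zero_add, EReal.coe_zero, EReal.zero_mul, zero_add]
    · rw [G_pos h2.ne' (by positivity : r1 + r2 ≠ 0)]
      exact caseB hconv h1 hr2 h2

lemma G_superadd_pos_left (hconv : ConvexOn ℝ (Set.Ioi (0:ℝ)) f)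
    {r2 p1 p2 : ℝ} (hr2 : 0 ≤ r2) (hp1 : 0 < p1) (hp2 : 0 < p2) :
    G f (0+r2) (p1+p2) ≤ G f 0 p1 + G f r2 p2 := by
  have hP : p1 + p2 ≠ 0 := by positivity
  rw [zero_add, G_r0 hp1.ne']
  rcases hr2.eq_or_lt with h2|h2
  · rw [← h2, G_r0 hP, G_r0 hp2.ne']
    exact le_of_eq (add_coe_mul hp1.le hp2.le _)
  · rw [G_pos hP h2.ne', G_pos hp2.ne' h2.ne']
    exact caseC hconv hp1 hp2 h2

lemma G_superadd (hconv : ConvexOn ℝ (Set.Ioi (0:ℝ)) f)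
    {r1 r2 p1 p2 : ℝ} (hr1 : 0 ≤ r1) (hr2 : 0 ≤ r2) (hp1 : 0 ≤ p1) (hp2 : 0 ≤ p2) :
    G f (r1+r2) (p1+p2) ≤ G f r1 p1 + G f r2 p2 := by
  rcases hp1.eq_or_lt with h1|h1
  · rw [← h1]; rw [← h1] at *
    exact G_superadd_left hconv hr1 hr2 hp2
  rcases hp2.eq_or_lt with h2|h2
  · rw [← h2, add_comm r1 r2, add_comm p1 (0:ℝ), add_comm (G f r1 p1)]
    exact G_superadd_left hconv hr2 hr1 hp1
  rcases hr1.eq_or_lt with hr1'|hr1'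
  · rw [← hr1']
    exact G_superadd_pos_left hconv hr2 h1 h2
  rcases hr2.eq_or_lt with hr2'|hr2'
  · rw [← hr2', add_comm r1 (0:ℝ), add_comm p1 p2, add_comm (G f r1 p1)]
    exact G_superadd_pos_left hconv hr1 h2 h1
  · rw [G_pos (by positivity : p1 + p2 ≠ 0) (by positivity : r1 + r2 ≠ 0),
      G_pos h1.ne' hr1'.ne', G_pos h2.ne' hr2'.ne', ← EReal.coe_add, EReal.coe_le_coe_iff]
    exact casePos hconv hr1' hr2' h1 h2

lemma G_smul {c r p : ℝ} (hc : 0 ≤ c) (hr : 0 ≤ r) (hp : 0 ≤ p) :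
    G f (c*r) (c*p) = (c : EReal) * G f r p := by
  rcases hc.eq_or_lt with h|h
  · rw [← h]; simp [G_p0]
  rcases hp.eq_or_lt with hp'|hp'
  · rw [← hp', mul_zero, G_p0, G_p0]
    exact coe_mul_assoc h hr _
  have hcp : c * p ≠ 0 := by positivity
  rcases hr.eq_or_lt with hr'|hr'
  · rw [← hr', mul_zero, G_r0 hcp, G_r0 hp'.ne']
    exact coe_mul_assoc h hp _
  · rw [G_pos hcp (by positivity), G_pos hp'.ne' hr'.ne',
      mul_div_mul_left r p h.ne', ← EReal.coe_mul]
    congr 1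
    ring

lemma G_zero : G f 0 0 = 0 := by rw [G_p0]; simp

lemma G_superadd_sum (hconv : ConvexOn ℝ (Set.Ioi (0:ℝ)) f)
    {ι : Type*} (t : Finset ι) (r p : ι → ℝ) (hr : ∀ i, 0 ≤ r i) (hp : ∀ i, 0 ≤ p i) :
    G f (∑ i ∈ t, r i) (∑ i ∈ t, p i) ≤ ∑ i ∈ t, G f (r i) (p i) := by
  classical
  induction t using Finset.cons_induction with
  | empty => simp [G_zero]
  | cons a t ha ih =>
    rw [Finset.sum_cons, Finset.sum_cons, Finset.sum_cons]
    calc G f (r a + ∑ i ∈ t, r i) (p a + ∑ i ∈ t, p i)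
        ≤ G f (r a) (p a) + G f (∑ i ∈ t, r i) (∑ i ∈ t, p i) :=
          G_superadd hconv (hr a) (Finset.sum_nonneg fun i _ => hr i) (hp a)
            (Finset.sum_nonneg fun i _ => hp i)
      _ ≤ _ := add_le_add le_rfl ih

lemma sum_coe_mul {ι : Type*} (t : Finset ι) (c : ι → ℝ) (hc : ∀ i, 0 ≤ c i) (a : EReal) :
    ∑ i ∈ t, ((c i : ℝ) : EReal) * a = ((∑ i ∈ t, c i : ℝ) : EReal) * a := by
  classical
  induction t using Finset.cons_induction with
  | empty => simp
  | cons b t hb ih =>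
    rw [Finset.sum_cons, Finset.sum_cons, ih,
      add_coe_mul (hc b) (Finset.sum_nonneg fun i _ => hc i)]

lemma fDivE_eq {𝒳 : Type*} [Fintype 𝒳] (R P : 𝒳 → ℝ) :
    fDivE f R P = ∑ x, G f (R x) (P x) := rfl

lemma fDivE_dpi {𝒳 𝒴 : Type*} [Fintype 𝒳] [Fintype 𝒴]
    (hconv : ConvexOn ℝ (Set.Ioi (0:ℝ)) f) (W : 𝒴 → 𝒳 → ℝ) (R P : 𝒳 → ℝ)
    (hW : IsChannel W) (hR : ∀ x, 0 ≤ R x) (hP : ∀ x, 0 ≤ P x) :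
    fDivE f (chanApply W R) (chanApply W P) ≤ fDivE f R P := by
  rw [fDivE_eq, fDivE_eq]
  calc ∑ y, G f (chanApply W R y) (chanApply W P y)
      ≤ ∑ y, ∑ x, G f (W y x * R x) (W y x * P x) :=
        Finset.sum_le_sum fun y _ => G_superadd_sum hconv _ _ _
          (fun x => mul_nonneg (hW.1 y x) (hR x)) (fun x => mul_nonneg (hW.1 y x) (hP x))
    _ = ∑ y, ∑ x, ((W y x : ℝ) : EReal) * G f (R x) (P x) := by
        refine Finset.sum_congr rfl fun y _ => Finset.sum_congr rfl fun x _ => ?_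
        exact G_smul (hW.1 y x) (hR x) (hP x)
    _ = ∑ x, ∑ y, ((W y x : ℝ) : EReal) * G f (R x) (P x) := Finset.sum_comm
    _ = ∑ x, ((∑ y, W y x : ℝ) : EReal) * G f (R x) (P x) := by
        refine Finset.sum_congr rfl fun x _ => ?_
        exact sum_coe_mul _ _ (fun y => hW.1 y x) _
    _ = ∑ x, G f (R x) (P x) := by
        refine Finset.sum_congr rfl fun x _ => ?_
        rw [hW.2 x, EReal.coe_one, one_mul]

lemma fDivE_nonneg {𝒳 : Type*} [Fintype 𝒳]
    (hconv : ConvexOn ℝ (Set.Ioi (0:ℝ)) f) (hf1 : f 1 = 0) {R P : 𝒳 → ℝ}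
    (hR : IsPmf R) (hP : IsPmf P) : 0 ≤ fDivE f R P := by
  rw [fDivE_eq]
  have h := G_superadd_sum hconv Finset.univ R P hR.1 hP.1
  rw [hR.2, hP.2] at h
  refine le_trans ?_ h
  rw [G_pos one_ne_zero one_ne_zero]
  norm_num [hf1]

lemma chanApply_isPmf {𝒳 𝒴 : Type*} [Fintype 𝒳] [Fintype 𝒴]
    {W : 𝒴 → 𝒳 → ℝ} {P : 𝒳 → ℝ} (hW : IsChannel W) (hP : IsPmf P) :
    IsPmf (chanApply W P) := by
  constructor
  · exact fun y => Finset.sum_nonneg fun x _ => mul_nonneg (hW.1 y x) (hP.1 x)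
  · simp only [chanApply]
    rw [Finset.sum_comm]
    calc ∑ x, ∑ y, W y x * P x = ∑ x, (∑ y, W y x) * P x := by
          simp [Finset.sum_mul]
      _ = 1 := by simp [hW.2, hP.2]

lemma chanApply_comp {𝒰 𝒳 𝒴 : Type*} [Fintype 𝒰] [Fintype 𝒳]
    (W : 𝒴 → 𝒳 → ℝ) (S : 𝒳 → 𝒰 → ℝ) (R : 𝒰 → ℝ) :
    chanApply (fun y u => ∑ x, W y x * S x u) R = chanApply W (chanApply S R) := by
  funext y
  simp only [chanApply, Finset.sum_mul, Finset.mul_sum]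
  rw [Finset.sum_comm]
  exact Finset.sum_congr rfl fun x _ => Finset.sum_congr rfl fun u _ => by ring

lemma le_etaF {𝒳 𝒴 : Type*} [Fintype 𝒳] [Fintype 𝒴]
    {P R : 𝒳 → ℝ} (W : 𝒴 → 𝒳 → ℝ) (hR : IsPmf R)
    (hpos : 0 < fDivE f R P) (hfin : fDivE f R P < ⊤) :
    fDivE f (chanApply W R) (chanApply W P) / fDivE f R P ≤ etaF f P W := by
  unfold etaF
  rw [if_pos ⟨_, R, hR, hpos, hfin, rfl⟩]
  exact le_sSup ⟨R, hR, hpos, hfin, rfl⟩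

lemma etaF_le {𝒳 𝒴 : Type*} [Fintype 𝒳] [Fintype 𝒴]
    {P : 𝒳 → ℝ} {W : 𝒴 → 𝒳 → ℝ} {c : EReal} (h0 : 0 ≤ c)
    (h : ∀ R : 𝒳 → ℝ, IsPmf R → 0 < fDivE f R P → fDivE f R P < ⊤ →
      fDivE f (chanApply W R) (chanApply W P) / fDivE f R P ≤ c) : etaF f P W ≤ c := by
  unfold etaF
  split_ifs with hA
  · exact sSup_le (fun q hq => by obtain ⟨R, h1, h2, h3, h4⟩ := hq; exact h4 ▸ h R h1 h2 h3)
  · exact h0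

lemma etaF_nonneg {𝒳 𝒴 : Type*} [Fintype 𝒳] [Fintype 𝒴]
    (hconv : ConvexOn ℝ (Set.Ioi (0:ℝ)) f) (hf1 : f 1 = 0)
    {P : 𝒳 → ℝ} {W : 𝒴 → 𝒳 → ℝ} (hP : IsPmf P) (hW : IsChannel W) :
    0 ≤ etaF f P W := by
  unfold etaF
  split_ifs with hA
  · obtain ⟨q, hq⟩ := hA
    refine le_trans ?_ (le_sSup hq)
    obtain ⟨R, h1, h2, h3, h4⟩ := hq
    rw [h4]
    exact EReal.div_nonneg
      (fDivE_nonneg hconv hf1 (chanApply_isPmf hW h1) (chanApply_isPmf hW hP)) h2.le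
  · exact le_refl 0

lemma chanApply_chanComp {𝒰 𝒳 𝒴 : Type*} [Fintype 𝒰] [Fintype 𝒳]
    (W : 𝒴 → 𝒳 → ℝ) (S : 𝒳 → 𝒰 → ℝ) (R : 𝒰 → ℝ) :
    chanApply (chanComp W S) R = chanApply W (chanApply S R) :=
  chanApply_comp W S R

/-- **Sub-multiplicativity of contraction coefficients:** for a Markov chain
`U → X → Y` given by channels `S : 𝒰 → 𝒳` and `W : 𝒳 → 𝒴` with `P_X = S P_U`,
`η_f(P_U, WS) ≤ η_f(P_U, S) · η_f(P_X, W)`. -/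
theorem etaF_submultiplicative
    {𝒰 𝒳 𝒴 : Type*} [Fintype 𝒰] [Fintype 𝒳] [Fintype 𝒴]
    (hcardU : 2 ≤ Fintype.card 𝒰) (hcardX : 2 ≤ Fintype.card 𝒳)
    (hcardY : 2 ≤ Fintype.card 𝒴)
    (f : ℝ → ℝ)
    (hconv : ConvexOn ℝ (Set.Ioi (0 : ℝ)) f)
    (hstrict : StrictlyConvexAtOne f)
    (hf1 : f 1 = 0)
    (PU : 𝒰 → ℝ) (S : 𝒳 → 𝒰 → ℝ) (W : 𝒴 → 𝒳 → ℝ)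
    (hPU : IsPmf PU) (hS : IsChannel S) (hW : IsChannel W) :
    etaF f PU (chanComp W S) ≤ etaF f PU S * etaF f (chanApply S PU) W := by
  classical
  set PX := chanApply S PU with hPXdef
  have hPX : IsPmf PX := chanApply_isPmf hS hPU
  have hprod0 : (0:EReal) ≤ etaF f PU S * etaF f PX W :=
    mul_nonneg (etaF_nonneg hconv hf1 hPU hS) (etaF_nonneg hconv hf1 hPX hW)
  refine etaF_le hprod0 ?_
  intro R hR hpos hfin
  rw [chanApply_chanComp, chanApply_chanComp]
  set RX := chanApply S R with hRXdef
  have hRX : IsPmf RX := chanApply_isPmf hS hR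
  set DR := fDivE f R PU with hDRdef
  set DS := fDivE f RX PX with hDSdef
  set DW := fDivE f (chanApply W RX) (chanApply W PX) with hDWdef
  have hDSle : DS ≤ DR := fDivE_dpi hconv S R PU hS hR.1 hPU.1
  have hDS0 : (0:EReal) ≤ DS := fDivE_nonneg hconv hf1 hRX hPX
  have hDWle : DW ≤ DS := fDivE_dpi hconv W RX PX hW hRX.1 hPX.1
  have hDW0 : (0:EReal) ≤ DW :=
    fDivE_nonneg hconv hf1 (chanApply_isPmf hW hRX) (chanApply_isPmf hW hPX)
  rcases hDS0.eq_or_lt with hDS|hDS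
  · have hDWz : DW = 0 := le_antisymm (hDWle.trans_eq hDS.symm) hDW0
    rw [hDWz, div_eq_mul_inv, EReal.zero_mul]
    exact hprod0
  · have hb : DS / DR ≤ etaF f PU S := le_etaF S hR hpos hfin
    have hSfin : DS < ⊤ := lt_of_le_of_lt hDSle hfin
    have ha : DW / DS ≤ etaF f PX W := le_etaF W hRX hDS hSfin
    have hDRnb : DR ≠ ⊥ := (lt_trans EReal.bot_lt_zero hpos).ne'
    have hDSnb : DS ≠ ⊥ := (lt_trans EReal.bot_lt_zero hDS).ne'
    have hDWnb : DW ≠ ⊥ := lt_of_lt_of_le EReal.bot_lt_zero hDW0 |>.ne'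
    have hDRc : DR = ((DR.toReal : ℝ) : EReal) := (EReal.coe_toReal hfin.ne hDRnb).symm
    have hDSc : DS = ((DS.toReal : ℝ) : EReal) := (EReal.coe_toReal hSfin.ne hDSnb).symm
    have hDWc : DW = ((DW.toReal : ℝ) : EReal) :=
      (EReal.coe_toReal (lt_of_le_of_lt hDWle hSfin).ne hDWnb).symm
    have hdRpos : 0 < DR.toReal := by
      rw [hDRc] at hpos; exact_mod_cast hpos
    have hdSpos : 0 < DS.toReal := by
      rw [hDSc] at hDS; exact_mod_cast hDS
    have key : DW / DR = (DS / DR) * (DW / DS) := by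
      rw [hDRc, hDSc, hDWc, ← EReal.coe_div, ← EReal.coe_div, ← EReal.coe_div, ← EReal.coe_mul]
      rw [EReal.coe_eq_coe_iff]
      field_simp
    rw [key]
    calc (DS/DR) * (DW/DS) ≤ (DS/DR) * etaF f PX W :=
          mul_le_mul_of_nonneg_left ha (EReal.div_nonneg hDS0 (le_of_lt hpos))
      _ ≤ etaF f PU S * etaF f PX W :=
          mul_le_mul_of_nonneg_right hb (etaF_nonneg hconv hf1 hPX hW)
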